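/- For every graph H with at least one edge, s(H) ≥ 2δ(H) - 1, where δ(H) is the minimum degree of H and s(H) is the smallest minimum degree over all H-Ramsey-minimal graphs. -/

import Mathlib

/-- A monochromatic copy of `H` in `G` of colour `c` under the edge-colouring `χ`. -/
def MonoCopy {α β : Type*} (H : SimpleGraph α) (G : SimpleGraph β)
    (χ : β → β → Bool) (c : Bool) : Prop :=
  ∃ f : α ↪ β, (∀ a b, H.Adj a b → G.Adj (f a) (f b)) ∧
    ∀ a b, H.Adj a b → χ (f a) (f b) = c

/-- `G` is Ramsey for `H`: every symmetric 2-colouring of the edges of `G`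
contains a monochromatic copy of `H`. -/
def IsRamseyFor {α β : Type*} (H : SimpleGraph α) (G : SimpleGraph β) : Prop :=
  ∀ χ : β → β → Bool, (∀ x y, χ x y = χ y x) → ∃ c, MonoCopy H G χ c
/-- `G` is Ramsey-minimal for `H`: `G` is Ramsey for `H` but no proper subgraph is. -/
def RamseyMinimal {α : Type*} (H : SimpleGraph α) {n : ℕ} (G : SimpleGraph (Fin n)) : Prop :=
  IsRamseyFor H G ∧ ∀ G' : G.Subgraph, G' ≠ ⊤ → ¬ IsRamseyFor H G'.coe

/-- Minimum degree of a finite graph. -/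
noncomputable def minDeg {V : Type*} [Fintype V] (G : SimpleGraph V) : ℕ := by
  classical exact G.minDegree

/-- `s(H)`: the smallest minimum degree over all Ramsey-minimal graphs for `H`. -/
noncomputable def sParam {α : Type*} (H : SimpleGraph α) : ℕ :=
  sInf { d | ∃ (n : ℕ) (G : SimpleGraph (Fin n)), RamseyMinimal H G ∧ minDeg G = d }

open Finset

lemma minDeg_eq {V : Type*} [Fintype V] (G : SimpleGraph V) [inst : DecidableRel G.Adj] :
    minDeg G = G.minDegree := by
  unfold minDeg
  congr!

/-- Finite Ramsey theorem for two colours. -/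
lemma ramsey_aux {V : Type*} [DecidableEq V] :
    ∀ (k r b : ℕ), r + b ≤ k → ∀ (s : Finset V) (χ : V → V → Bool),
      (∀ x y, χ x y = χ y x) → (r + b).choose r ≤ s.card →
      ∃ (c : Bool) (t : Finset V), t ⊆ s ∧ t.card = (if c then r else b) ∧
        ∀ x ∈ t, ∀ y ∈ t, x ≠ y → χ x y = c := by
  intro k
  induction k with
  | zero =>
    intro r b hk s χ hχ hcard
    obtain ⟨rfl, rfl⟩ : r = 0 ∧ b = 0 := by omega
    exact ⟨true, ∅, empty_subset s, by simp, by simp⟩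
  | succ k ih =>
    intro r b hk s χ hχ hcard
    match r, b with
    | 0, b => exact ⟨true, ∅, empty_subset s, by simp, by simp⟩
    | r+1, 0 => exact ⟨false, ∅, empty_subset s, by simp, by simp⟩
    | r+1, b+1 =>
      have key : (r + (b+1)).choose r + ((r+1) + b).choose (r+1) ≤ s.card := by
        have h1 : ((r+1)+(b+1)).choose (r+1) = (r+b+1).choose r + (r+b+1).choose (r+1) := by
          have := Nat.choose_succ_succ (r+b+1) r
          simpa [show (r+1)+(b+1) = (r+b+1)+1 by omega] using this
        have h2 : r + (b+1) = r + b + 1 := by omega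
        have h3 : (r+1) + b = r + b + 1 := by omega
        rw [h2, h3]
        rw [h1] at hcard
        exact hcard
      have hpos : 0 < s.card := by
        have : 0 < ((r+1) + b).choose (r+1) := Nat.choose_pos (by omega)
        omega
      obtain ⟨v, hv⟩ := card_pos.mp hpos
      set s' := s.erase v with hs'
      set R := s'.filter (fun x => χ v x = true) with hRdef
      set B := s'.filter (fun x => ¬ (χ v x = true)) with hBdef
      have hRB : R.card + B.card = s.card - 1 := by
        rw [hRdef, hBdef, card_filter_add_card_filter_not, hs',
          card_erase_of_mem hv]
      have hRs : R ⊆ s := (filter_subset _ _).trans (erase_subset _ _)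
      have hBs : B ⊆ s := (filter_subset _ _).trans (erase_subset _ _)
      have hcases : (r + (b+1)).choose r ≤ R.card ∨ ((r+1)+b).choose (r+1) ≤ B.card := by
        omega
      rcases hcases with h | h
      · obtain ⟨c, t, hts, htc, htm⟩ := ih r (b+1) (by omega) R χ hχ h
        cases c with
        | false =>
          exact ⟨false, t, hts.trans hRs, by simpa using htc, htm⟩
        | true =>
          refine ⟨true, insert v t, ?_, ?_, ?_⟩
          · exact insert_subset hv (hts.trans hRs)
          · have hvt : v ∉ t := fun hvt =>
              (notMem_erase v s) ((filter_subset _ _) (hts hvt))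
            have htc' : t.card = r := by simpa using htc
            rw [card_insert_of_notMem hvt]
            simp [htc']
          · intro x hx y hy hxy
            rcases mem_insert.mp hx with rfl | hx'
            · rcases mem_insert.mp hy with rfl | hy'
              · exact absurd rfl hxy
              · exact (mem_filter.mp (hts hy')).2
            · rcases mem_insert.mp hy with rfl | hy'
              · rw [hχ]; exact (mem_filter.mp (hts hx')).2
              · exact htm x hx' y hy' hxy
      · obtain ⟨c, t, hts, htc, htm⟩ := ih (r+1) b (by omega) B χ hχ h
        cases c with
        | true =>
          exact ⟨true, t, hts.trans hBs, by simpa using htc, htm⟩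
        | false =>
          refine ⟨false, insert v t, ?_, ?_, ?_⟩
          · exact insert_subset hv (hts.trans hBs)
          · have hvt : v ∉ t := fun hvt =>
              (notMem_erase v s) ((filter_subset _ _) (hts hvt))
            have htc' : t.card = b := by simpa using htc
            rw [card_insert_of_notMem hvt]
            simp [htc']
          · intro x hx y hy hxy
            rcases mem_insert.mp hx with rfl | hx'
            · rcases mem_insert.mp hy with rfl | hy'
              · exact absurd rfl hxy
              · have := (mem_filter.mp (hts hy')).2
                simpa using this
            · rcases mem_insert.mp hy with rfl | hy'
              · rw [hχ]
                have := (mem_filter.mp (hts hx')).2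
                simpa using this
              · exact htm x hx' y hy' hxy

/-- A big complete graph is Ramsey for `H`. -/
lemma top_isRamseyFor {m : ℕ} (H : SimpleGraph (Fin m)) :
    IsRamseyFor H (⊤ : SimpleGraph (Fin ((m + m).choose m))) := by
  intro χ hχ
  obtain ⟨c, t, -, htc, htm⟩ := ramsey_aux (m + m) m m le_rfl Finset.univ χ hχ
    (by simp)
  have htc' : t.card = m := by cases c <;> simpa using htc
  set e : Fin m ≃ t := (Finset.equivFinOfCardEq htc').symm with he
  have hinj : Function.Injective (fun a : Fin m => ((e a : t) : Fin ((m+m).choose m))) := by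
    intro a b h
    exact e.injective (Subtype.ext h)
  refine ⟨c, ⟨fun a => ((e a : t) : Fin ((m+m).choose m)), hinj⟩, ?_, ?_⟩
  · intro a b hab
    simpa using hinj.ne hab.ne
  · intro a b hab
    exact htm _ (e a).2 _ (e b).2 (fun h => hab.ne (e.injective (Subtype.ext h)))

lemma isRamseyFor_comap {α β γ : Type*} (H : SimpleGraph α) (G : SimpleGraph β)
    (e : γ ≃ β) (h : IsRamseyFor H G) : IsRamseyFor H (G.comap ⇑e) := by
  intro χ hχ
  obtain ⟨c, f, hadj, hcol⟩ := h (fun x y => χ (e.symm x) (e.symm y)) (fun x y => hχ _ _)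
  refine ⟨c, f.trans e.symm.toEmbedding, ?_, ?_⟩
  · intro a b hab
    simpa using hadj a b hab
  · intro a b hab
    simpa using hcol a b hab

/-- There exists a Ramsey-minimal graph for `H`. -/
lemma exists_ramseyMinimal {m : ℕ} (H : SimpleGraph (Fin m)) :
    ∃ (n : ℕ) (G : SimpleGraph (Fin n)), RamseyMinimal H G := by
  classical
  set S : Set ℕ := {k | ∃ (n : ℕ) (G : SimpleGraph (Fin n)), IsRamseyFor H G ∧
      n + Nat.card {p : Fin n × Fin n // G.Adj p.1 p.2} = k} with hSdef
  have hS : S.Nonempty := ⟨_, _, _, top_isRamseyFor H, rfl⟩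
  obtain ⟨n, G, hG, hk⟩ := Nat.sInf_mem hS
  refine ⟨n, G, hG, ?_⟩
  intro G' hne hG'
  haveI : Fintype ↥G'.verts := Fintype.ofFinite _
  set n' := Fintype.card ↥G'.verts with hn'
  set e : ↥G'.verts ≃ Fin n' := Fintype.equivFin ↥G'.verts with he
  set G₂ : SimpleGraph (Fin n') := G'.coe.comap ⇑e.symm with hG₂def
  have hG₂ : IsRamseyFor H G₂ := isRamseyFor_comap H G'.coe e.symm hG'
  -- the injection on adjacency pairs
  set j : {p : ↥G'.verts × ↥G'.verts // G'.coe.Adj p.1 p.2} →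
      {p : Fin n × Fin n // G.Adj p.1 p.2} :=
    fun q => ⟨((q.1.1 : Fin n), (q.1.2 : Fin n)), q.2.adj_sub⟩ with hj
  have hjinj : Function.Injective j := by
    rintro ⟨⟨a, b⟩, h⟩ ⟨⟨a', b'⟩, h'⟩ heq
    simp only [hj, Subtype.mk.injEq, Prod.mk.injEq] at heq
    apply Subtype.ext
    simp only [Prod.ext_iff, Subtype.ext_iff]
    exact ⟨heq.1, heq.2⟩
  have hcard2 : Nat.card {p : Fin n' × Fin n' // G₂.Adj p.1 p.2} =
      Nat.card {p : ↥G'.verts × ↥G'.verts // G'.coe.Adj p.1 p.2} := by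
    apply Nat.card_congr
    refine Equiv.subtypeEquiv (Equiv.prodCongr e.symm e.symm) (fun p => ?_)
    simp [hG₂def, SimpleGraph.comap_adj, Equiv.prodCongr_apply]
  have hmem2 : n' + Nat.card {p : Fin n' × Fin n' // G₂.Adj p.1 p.2} ∈ S :=
    ⟨n', G₂, hG₂, rfl⟩
  have hle := Nat.sInf_le hmem2
  -- now show strict decrease
  haveI : Fintype {p : ↥G'.verts × ↥G'.verts // G'.coe.Adj p.1 p.2} := Fintype.ofFinite _
  haveI : Fintype {p : Fin n × Fin n // G.Adj p.1 p.2} := Fintype.ofFinite _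
  have hdec : n' + Nat.card {p : ↥G'.verts × ↥G'.verts // G'.coe.Adj p.1 p.2} <
      n + Nat.card {p : Fin n × Fin n // G.Adj p.1 p.2} := by
    by_cases hv : G'.verts = Set.univ
    · -- same vertex set, so some edge is missing
      have hAdj : ∃ x y, G.Adj x y ∧ ¬ G'.Adj x y := by
        by_contra hc
        push_neg at hc
        apply hne
        ext x y
        · simp [hv]
        · constructor
          · exact fun h => h.adj_sub
          · exact fun h => hc x y h
      obtain ⟨x, y, hxy, hxy'⟩ := hAdj
      have hlt : Nat.card {p : ↥G'.verts × ↥G'.verts // G'.coe.Adj p.1 p.2} <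
          Nat.card {p : Fin n × Fin n // G.Adj p.1 p.2} := by
        rw [Nat.card_eq_fintype_card, Nat.card_eq_fintype_card]
        refine Fintype.card_lt_of_injective_of_notMem j hjinj (b := ⟨(x, y), hxy⟩) ?_
        rintro ⟨⟨⟨⟨a, ha⟩, ⟨b, hb⟩⟩, hadj⟩, heq⟩
        simp only [hj, Subtype.mk.injEq, Prod.mk.injEq] at heq
        apply hxy'
        rw [← heq.1, ← heq.2]
        exact hadj
      have hn'le : n' ≤ n := by
        have := Fintype.card_le_of_injective (fun q : ↥G'.verts => (q : Fin n))
          Subtype.val_injective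
        simpa [hn'] using this
      omega
    · -- a vertex is missing
      obtain ⟨w, hw⟩ : ∃ w, w ∉ G'.verts := by
        by_contra hc
        push_neg at hc
        exact hv (Set.eq_univ_of_forall hc)
      have hn'lt : n' < n := by
        have := Fintype.card_lt_of_injective_of_notMem
          (fun q : ↥G'.verts => (q : Fin n)) Subtype.val_injective (b := w)
          (by rintro ⟨⟨a, ha⟩, rfl⟩; exact hw ha)
        simpa [hn'] using this
      have hcle : Nat.card {p : ↥G'.verts × ↥G'.verts // G'.coe.Adj p.1 p.2} ≤
          Nat.card {p : Fin n × Fin n // G.Adj p.1 p.2} :=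
        Nat.card_le_card_of_injective j hjinj
      omega
  rw [hcard2] at hle
  omega

/-- Every Ramsey-minimal graph for `H` has minimum degree at least `2δ(H) - 1`. -/
lemma minimal_minDeg {m n : ℕ} (H : SimpleGraph (Fin m)) (hH : ∃ x y, H.Adj x y)
    (G : SimpleGraph (Fin n)) (hG : RamseyMinimal H G) : 2 * minDeg H - 1 ≤ minDeg G := by
  classical
  set δ := minDeg H with hδdef
  rcases Nat.eq_zero_or_pos δ with hδ | hδ
  · simp [hδ]
  obtain ⟨x₀, y₀, hxy₀⟩ := hH
  haveI : Nonempty (Fin m) := ⟨x₀⟩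
  haveI : Nonempty (Fin n) := by
    obtain ⟨c, f, -, -⟩ := hG.1 (fun _ _ => true) (fun _ _ => rfl)
    exact ⟨f x₀⟩
  by_contra hlt
  push_neg at hlt
  rw [minDeg_eq] at hlt
  obtain ⟨v, hv⟩ := G.exists_minimal_degree_vertex
  rw [hv] at hlt
  have hd : G.degree v ≤ 2 * δ - 2 := by omega
  set N := G.neighborFinset v with hNdef
  have hN : N.card = G.degree v := G.card_neighborFinset_eq_degree v
  obtain ⟨A, hAN, hA⟩ := Finset.exists_subset_card_eq (s := N) (n := min N.card (δ - 1)) (min_le_left _ _)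
  set B := N \ A with hBdef
  have hAcard : A.card ≤ δ - 1 := hA.le.trans (min_le_right _ _)
  have hBc : B.card = N.card - A.card := Finset.card_sdiff_of_subset hAN
  have hBcard : B.card ≤ δ - 1 := by
    rcases le_total N.card (δ - 1) with h | h
    · have hAe : A.card = N.card := by rw [hA, min_eq_left h]
      omega
    · have hAe : A.card = δ - 1 := by rw [hA, min_eq_right h]
      omega
  set G' : G.Subgraph := (⊤ : G.Subgraph).deleteVerts {v} with hG'def
  have hvnot : v ∉ G'.verts := by
    simp [hG'def]
  have hne : G' ≠ ⊤ := by
    intro h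
    apply hvnot
    rw [h]
    simp
  have hmem : ∀ x : Fin n, x ≠ v → x ∈ G'.verts := by
    intro x hx
    simp [hG'def, hx]
  have hnR := hG.2 G' hne
  rw [IsRamseyFor] at hnR
  push_neg at hnR
  obtain ⟨χ₀, hχ₀s, hχ₀⟩ := hnR
  set χ : Fin n → Fin n → Bool := fun x y =>
    if hx : x = v then decide (y ∈ A)
    else if hy : y = v then decide (x ∈ A)
    else χ₀ ⟨x, hmem x hx⟩ ⟨y, hmem y hy⟩ with hχdef
  have hχs : ∀ x y, χ x y = χ y x := by
    intro x y
    by_cases hx : x = v <;> by_cases hy : y = v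
    · subst hx; subst hy; rfl
    · subst hx; simp [hχdef, hy]
    · subst hy; simp [hχdef, hx]
    · simp [hχdef, hx, hy, hχ₀s]
  obtain ⟨c, f, hadj, hcol⟩ := hG.1 χ hχs
  by_cases hvf : ∃ a, f a = v
  · obtain ⟨a₀, ha₀⟩ := hvf
    have hdegH : δ ≤ H.degree a₀ := by
      rw [hδdef, minDeg_eq]
      exact H.minDegree_le_degree a₀
    have hstep : ∀ b ∈ H.neighborFinset a₀, f b ∈ N ∧ decide (f b ∈ A) = c := by
      intro b hb
      rw [SimpleGraph.mem_neighborFinset] at hb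
      have hGadj : G.Adj v (f b) := ha₀ ▸ hadj a₀ b hb
      have hfbN : f b ∈ N := by
        rw [hNdef, SimpleGraph.mem_neighborFinset]
        exact hGadj
      have hcolb := hcol a₀ b hb
      rw [ha₀] at hcolb
      exact ⟨hfbN, by simpa [hχdef] using hcolb⟩
    have hcount : ∀ T : Finset (Fin n), (∀ b ∈ H.neighborFinset a₀, f b ∈ T) → δ ≤ T.card := by
      intro T hT
      calc δ ≤ H.degree a₀ := hdegH
        _ = (H.neighborFinset a₀).card := (H.card_neighborFinset_eq_degree a₀).symm
        _ = ((H.neighborFinset a₀).image f).card :=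
            (Finset.card_image_of_injective _ f.injective).symm
        _ ≤ T.card := Finset.card_le_card (by
            intro z hz
            obtain ⟨b, hb, rfl⟩ := Finset.mem_image.mp hz
            exact hT b hb)
    cases c with
    | true =>
      have h1 : δ ≤ A.card := hcount A (fun b hb => of_decide_eq_true (hstep b hb).2)
      omega
    | false =>
      have h1 : δ ≤ B.card := hcount B (fun b hb => by
        rw [hBdef]
        exact Finset.mem_sdiff.mpr ⟨(hstep b hb).1, of_decide_eq_false (hstep b hb).2⟩)
      omega
  · push_neg at hvf
    apply hχ₀ c
    refine ⟨⟨fun a => ⟨f a, hmem (f a) (hvf a)⟩,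
      fun a b hab => f.injective (congrArg Subtype.val hab)⟩, ?_, ?_⟩
    · intro a b hab
      have hGab := hadj a b hab
      simp only [Function.Embedding.coeFn_mk, SimpleGraph.Subgraph.coe_adj, hG'def,
        SimpleGraph.Subgraph.deleteVerts_adj]
      simp [hvf a, hvf b, hGab]
      exact ⟨hvf a, hvf b, hGab⟩
    · intro a b hab
      have hc := hcol a b hab
      simp only [hχdef, dif_neg (hvf a), dif_neg (hvf b)] at hc
      exact hc

/-- For every graph `H` with at least one edge, `s(H) ≥ 2·δ(H) - 1`. -/
theorem two_minDeg_sub_one_le_sParam {m : ℕ} (H : SimpleGraph (Fin m))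
    (hH : ∃ x y, H.Adj x y) :
    2 * minDeg H - 1 ≤ sParam H := by
  classical
  have hne : { d | ∃ (n : ℕ) (G : SimpleGraph (Fin n)),
      RamseyMinimal H G ∧ minDeg G = d }.Nonempty := by
    obtain ⟨n, G, hG⟩ := exists_ramseyMinimal H
    exact ⟨minDeg G, n, G, hG, rfl⟩
  obtain ⟨n, G, hG, hd⟩ := Nat.sInf_mem hne
  calc 2 * minDeg H - 1 ≤ minDeg G := minimal_minDeg H hH G hG
    _ = sParam H := hd
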